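/- Let μ > 1 and p̄ be the shifted Poisson distribution p̄₀ = 0, p̄ₙ = (μ−1)^{n−1}/(n−1)!·e^{−(μ−1)} for n ≥ 1. Define the operator Q̂ by Q̂[p]₀ = −(μ−1)·p₀ and Q̂[p]ₙ = n·p_{n+1} + (μ−1)·p_{n−1} − (n−1)·pₙ − (μ−1)·pₙ for n ≥ 1. Then Q̂[p̄] = 0, i.e., p̄ is a stationary solution of the linear system. -/
import Mathlib


open Real

/-- The linear operator Q̂ of the mean-field system. -/
noncomputable def Qhat (μ : ℝ) (p : ℕ → ℝ) : ℕ → ℝ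
  | 0 => -(μ - 1) * p 0
  | (n + 1) => ((n : ℝ) + 1) * p (n + 2) + (μ - 1) * p n
      - ((n : ℝ) + 1 - 1) * p (n + 1) - (μ - 1) * p (n + 1)

/-- For μ > 1, the shifted Poisson distribution p̄ is stationary for Q̂: `Q̂[p̄] = 0`. -/
theorem stmt_9 (μ : ℝ) (hμ : 1 < μ)
    (pbar : ℕ → ℝ) (hbar0 : pbar 0 = 0)
    (hbar : ∀ n : ℕ, 1 ≤ n →
      pbar n = (μ - 1) ^ (n - 1) / (n - 1).factorial * exp (-(μ - 1))) :
    ∀ n, Qhat μ pbar n = 0 := by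
  intro n
  match n with
  | 0 => simp [Qhat, hbar0]
  | 1 =>
    have h1 := hbar 1 (by norm_num)
    have h2 := hbar 2 (by norm_num)
    simp only [Qhat, hbar0, h1, h2]
    norm_num
  | (n + 2) =>
    have h1 := hbar (n + 1) (by omega)
    have h2 := hbar (n + 2) (by omega)
    have h3 := hbar (n + 3) (by omega)
    simp only [Qhat, h1, h2, h3, Nat.add_sub_cancel]
    have e1 : n + 1 - 1 = n := by omega
    have e2 : n + 2 - 1 = n + 1 := by omega
    have e3 : n + 3 - 1 = n + 2 := by omega
    simp only [e2, e3]
    push_cast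
    have hf1 : ((n + 1).factorial : ℝ) = (n + 1) * n.factorial := by
      rw [Nat.factorial_succ]; push_cast; ring
    have hf2 : ((n + 2).factorial : ℝ) = (n + 2) * (n + 1) * n.factorial := by
      rw [Nat.factorial_succ, Nat.factorial_succ]; push_cast; ring
    have hn : (n.factorial : ℝ) ≠ 0 := by positivity
    rw [hf1, hf2]
    field_simp
    ring
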